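/- The frame polarity with respect to a triangle is involutive: for any generic point p of the projective plane (a point lying on no side of the triangle Δ), one has (p^•)^• = p, where p^• denotes the frame polar line of p and the polarity on lines is defined dually with respect to the dual triangle. -/

import Mathlib

/-- `φ` is a representative, in the dual space, of the frame polar hyperplane of the
point `P(p)` with respect to the triangle `(P(v 0), P(v 1), P(v 2))`: there is a basis
`b` adapted to the projective frame `(P(v 0), P(v 1), P(v 2), P(p))`
(i.e. `b i = c i • v i` and `b 0 + b 1 + b 2 = d • p` with nonzero scalars), and
`φ` is the sum of the dual basis vectors. -/
def IsFramePolar {K V : Type*} [Field K] [AddCommGroup V] [Module K V]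
    (v : Fin 3 → V) (p : V) (φ : Module.Dual K V) : Prop :=
  ∃ (b : Module.Basis (Fin 3) K V) (c : Fin 3 → K) (d : K), (∀ i, c i ≠ 0) ∧ d ≠ 0 ∧
    (∀ i, b i = c i • v i) ∧ (b 0 + b 1 + b 2 = d • p) ∧
    φ = b.dualBasis 0 + b.dualBasis 1 + b.dualBasis 2

/-- the frame polarity with respect to a triangle is involutive.
Let `v 0, v 1, v 2` be representatives of the vertices of a triangle in a projective
plane `P(V)` (`dim V = 3`), and `p` a representative of a generic point (on no side).
Let `φ` represent the frame polar line `p^•`.  The dual triangle has vertices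
`D₁*, D₂*, D₃*`, represented by forms `w i` vanishing on the two vertices `v j`, `j ≠ i`;
let `Ψ` represent the frame polar, in `P(V*)`, of the point `φ` with respect to this
dual triangle.  Then `Ψ` corresponds, under the canonical identification `V ≃ V**`,
to the original point: `Ψ = t • eval p` for some nonzero scalar `t`. -/
theorem stmt2 (K V : Type*) [Field K] [AddCommGroup V] [Module K V]
    [FiniteDimensional K V] (hdim : Module.finrank K V = 3)
    (v : Fin 3 → V) (hv : LinearIndependent K v)
    (p : V) (hp : ∀ i j : Fin 3, i ≠ j → p ∉ Submodule.span K {v i, v j})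
    (w : Fin 3 → Module.Dual K V) (hw0 : ∀ i, w i ≠ 0)
    (hw : ∀ i j : Fin 3, i ≠ j → w i (v j) = 0)
    (φ : Module.Dual K V) (hφ : IsFramePolar v p φ)
    (Ψ : Module.Dual K (Module.Dual K V)) (hΨ : IsFramePolar w φ Ψ) :
    ∃ t : K, t ≠ 0 ∧ Ψ = t • Module.Dual.eval K V p := by
  have fin3 : ∀ j : Fin 3, j = 0 ∨ j = 1 ∨ j = 2 := by decide
  obtain ⟨b, c, d, hc, hd, hbc, hsum, hφeq⟩ := hφ
  obtain ⟨b', c', d', hc', hd', hbc', hsum', hΨeq⟩ := hΨ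
  have hcard : Fintype.card (Fin 3) = Module.finrank K V := by simp [hdim]
  let bV : Module.Basis (Fin 3) K V := basisOfLinearIndependentOfCardEqFinrank hv hcard
  have hbV : ∀ i, bV i = v i := fun i => by
    simp [bV, coe_basisOfLinearIndependentOfCardEqFinrank]
  -- w i does not vanish at v i
  have hwvi : ∀ i, w i (v i) ≠ 0 := by
    intro i h
    apply hw0 i
    apply Module.Basis.ext bV
    intro j
    rw [hbV]
    by_cases hij : i = j
    · subst hij; simp [h]
    · simp [hw i j hij]
  have he : ∀ i, w i (b i) ≠ 0 := by
    intro i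
    rw [hbc i, map_smul, smul_eq_mul]
    exact mul_ne_zero (hc i) (hwvi i)
  have hwb : ∀ i j, i ≠ j → w i (b j) = 0 := fun i j h => by
    rw [hbc j, map_smul, hw i j h, smul_zero]
  have hφb : ∀ j, φ (b j) = 1 := by
    intro j
    rw [hφeq]
    fin_cases j <;> simp [Module.Basis.dualBasis_apply_self]
  -- d * w j p = w j (b j)
  have hwp : ∀ j, d * w j p = w j (b j) := by
    intro j
    have h1 : w j (b 0) + w j (b 1) + w j (b 2) = d * w j p := by
      have := congrArg (w j) hsum
      simpa [map_add, map_smul, smul_eq_mul] using this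
    rcases fin3 j with rfl | rfl | rfl
    · rw [hwb 0 1 (by decide), hwb 0 2 (by decide)] at h1
      simpa using h1.symm
    · rw [hwb 1 0 (by decide), hwb 1 2 (by decide)] at h1
      simpa using h1.symm
    · rw [hwb 2 0 (by decide), hwb 2 1 (by decide)] at h1
      simpa using h1.symm
  -- c' j * w j (b j) = d'
  have hkey : ∀ j, c' j * w j (b j) = d' := by
    intro j
    have h2 : (b' 0 + b' 1 + b' 2) (b j) = (d' • φ) (b j) := by rw [hsum']
    simp only [LinearMap.add_apply, LinearMap.smul_apply, smul_eq_mul, hφb j, mul_one,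
      hbc' 0, hbc' 1, hbc' 2] at h2
    rcases fin3 j with rfl | rfl | rfl
    · rw [hwb 1 0 (by decide), hwb 2 0 (by decide)] at h2
      simpa using h2
    · rw [hwb 0 1 (by decide), hwb 2 1 (by decide)] at h2
      simpa using h2
    · rw [hwb 0 2 (by decide), hwb 1 2 (by decide)] at h2
      simpa using h2
  -- b' j p = d' / d
  have hbp : ∀ j, d * b' j p = d' := by
    intro j
    rw [hbc' j, LinearMap.smul_apply, smul_eq_mul]
    calc d * (c' j * w j p) = c' j * (d * w j p) := by ring
    _ = c' j * w j (b j) := by rw [hwp j]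
    _ = d' := hkey j
  refine ⟨d * d'⁻¹, mul_ne_zero hd (inv_ne_zero hd'), ?_⟩
  apply Module.Basis.ext b'
  intro j
  have hL : Ψ (b' j) = 1 := by
    rw [hΨeq]
    fin_cases j <;> simp [Module.Basis.dualBasis_apply_self]
  rw [hL, LinearMap.smul_apply, smul_eq_mul]
  have : Module.Dual.eval K V p (b' j) = b' j p := rfl
  rw [this]
  symm
  have h4 : d * d'⁻¹ * (b' j) p = (d * (b' j) p) * d'⁻¹ := by ring
  rw [h4, hbp j, mul_inv_cancel₀ hd']
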